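/- Let K = ℓ²(ℕ) (indexed from n = 1) and H = K ⊕ K. Let T₁ be the diagonal operator on K with diagonals (1/n)_n and T₂ the diagonal operator with diagonals (1/((n+1)·log(n+1)))_n. Then the systems (H; K ⊕ 0, graph(T₁)) and (H; K ⊕ 0, graph(T₂)) are not boundedly isomorphic (even though T₁ and T₂ have the same Schatten invariant Sh(T₁) = Sh(T₂) = 1). -/

import Mathlib

open scoped ENNReal

noncomputable section

abbrev K : Type := lp (fun _ : ℕ => ℂ) 2

/-- The graph of the diagonal operator with diagonals `a`, as a subspace of `K × K`. -/
def diagGraph (a : ℕ → ℂ) : Submodule ℂ (K × K) where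
  carrier := {p | ∀ n, p.2 n = a n * p.1 n}
  add_mem' := by
    intro p q hp hq n
    simp only [Prod.snd_add, Prod.fst_add, lp.coeFn_add, Pi.add_apply, hp n, hq n]
    ring
  zero_mem' := by
    intro n
    simp [lp.coeFn_zero]
  smul_mem' := by
    intro c p hp n
    simp only [Prod.smul_snd, Prod.smul_fst, lp.coeFn_smul, Pi.smul_apply, hp n, smul_eq_mul]
    ring

/-- The subspace K ⊕ 0 of K ⊕ K. -/
def firstSummand : Submodule ℂ (K × K) := (⊤ : Submodule ℂ K).prod (⊥ : Submodule ℂ K)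

namespace Aux

theorem memDiag (a : ℕ → ℂ) {C : ℝ} (ha : ∀ n, ‖a n‖ ≤ C) (x : K) :
    Memℓp (fun n => a n * x n) 2 := by
  have hC : 0 ≤ C := (norm_nonneg (a 0)).trans (ha 0)
  apply memℓp_gen
  have hx : Summable (fun n => ‖x n‖ ^ (2 : ℝ≥0∞).toReal) := (lp.memℓp x).summable (by norm_num)
  refine Summable.of_nonneg_of_le (fun n => Real.rpow_nonneg (norm_nonneg _) _)
    (fun n => ?_) (hx.mul_left (C ^ (2 : ℝ≥0∞).toReal))
  rw [← Real.mul_rpow (by positivity) (norm_nonneg _)]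
  apply Real.rpow_le_rpow (norm_nonneg _) ?_ (by norm_num)
  rw [norm_mul]
  exact mul_le_mul_of_nonneg_right (ha n) (norm_nonneg _)

/-- The diagonal operator with diagonal `a`, bounded by `C`. -/
def diag (a : ℕ → ℂ) {C : ℝ} (hC : 0 ≤ C) (ha : ∀ n, ‖a n‖ ≤ C) : K →L[ℂ] K :=
  LinearMap.mkContinuous
    { toFun := fun x => ⟨fun n => a n * x n, memDiag a ha x⟩
      map_add' := by
        intro x y; apply Subtype.ext; funext n
        show a n * (x + y) n = (⟨fun n => a n * x n, memDiag a ha x⟩ + ⟨fun n => a n * y n, memDiag a ha y⟩ : K) n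
        rw [lp.coeFn_add, Pi.add_apply]
        show a n * ((x : ∀ _ : ℕ, ℂ) + y) n = a n * x n + a n * y n
        rw [Pi.add_apply, mul_add]
      map_smul' := by
        intro c x; apply Subtype.ext; funext n
        show a n * (c • x) n = (c • (⟨fun n => a n * x n, memDiag a ha x⟩ : K)) n
        rw [lp.coeFn_smul, Pi.smul_apply, lp.coeFn_smul, Pi.smul_apply, smul_eq_mul, smul_eq_mul]
        ring } C
    (by
      intro x
      show ‖(⟨fun n => a n * x n, memDiag a ha x⟩ : K)‖ ≤ C * ‖x‖
      have h2 : (0:ℝ) < (2 : ℝ≥0∞).toReal := by norm_num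
      set y : K := ⟨fun n => a n * x n, memDiag a ha x⟩ with hy
      rw [← Real.rpow_le_rpow_iff (lp.norm_nonneg' y) (by positivity) h2,
        Real.mul_rpow hC (norm_nonneg x), lp.norm_rpow_eq_tsum h2 y,
        lp.norm_rpow_eq_tsum h2 x, ← tsum_mul_left]
      refine Summable.tsum_le_tsum (fun n => ?_) ((lp.memℓp y).summable h2)
        (((lp.memℓp x).summable h2).mul_left _)
      rw [← Real.mul_rpow hC (norm_nonneg _)]
      apply Real.rpow_le_rpow (norm_nonneg _) ?_ h2.le
      show ‖a n * x n‖ ≤ C * ‖x n‖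
      rw [norm_mul]
      exact mul_le_mul_of_nonneg_right (ha n) (norm_nonneg _))

@[simp] theorem diag_apply (a : ℕ → ℂ) {C : ℝ} (hC : 0 ≤ C) (ha : ∀ n, ‖a n‖ ≤ C) (x : K)
    (n : ℕ) : (diag a hC ha x) n = a n * x n := rfl

theorem diag_norm_le (a : ℕ → ℂ) {C : ℝ} (hC : 0 ≤ C) (ha : ∀ n, ‖a n‖ ≤ C) (x : K) :
    ‖diag a hC ha x‖ ≤ C * ‖x‖ :=
  ContinuousLinearMap.le_of_opNorm_le _ (LinearMap.mkContinuous_norm_le _ hC _) x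

/-- Evaluation at a coordinate, as a linear map. -/
def evalLM (j : ℕ) : K →ₗ[ℂ] ℂ where
  toFun x := x j
  map_add' _ _ := rfl
  map_smul' _ _ := rfl

/-- The linear map sending coefficients to the corresponding combination of basis vectors. -/
def sumSingle (m : ℕ) : (Fin m → ℂ) →ₗ[ℂ] K where
  toFun c := ∑ i, c i • lp.single 2 (i : ℕ) (1 : ℂ)
  map_add' c d := by simp [add_smul, Finset.sum_add_distrib]
  map_smul' r c := by simp [Finset.smul_sum, smul_smul]

theorem sumSingle_apply (m : ℕ) (c : Fin m → ℂ) (k : ℕ) :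
    (sumSingle m c) k = if h : k < m then c ⟨k, h⟩ else 0 := by
  have : ((sumSingle m c : K) : ∀ _ : ℕ, ℂ)
      = ∑ i : Fin m, ((c i • lp.single 2 (i : ℕ) (1 : ℂ) : K) : ∀ _ : ℕ, ℂ) := by
    rw [show (sumSingle m c : K) = ∑ i, c i • lp.single 2 (i : ℕ) (1 : ℂ) from rfl,
      lp.coeFn_sum]
  rw [this, Finset.sum_apply]
  have hterm : ∀ i : Fin m, ((c i • lp.single 2 (i : ℕ) (1 : ℂ) : K) : ∀ _ : ℕ, ℂ) k
      = if (k : ℕ) = (i : ℕ) then c i else 0 := by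
    intro i
    rw [lp.coeFn_smul, Pi.smul_apply, lp.single_apply]
    by_cases h : k = (i : ℕ) <;> simp [h]
  simp_rw [hterm]
  by_cases h : k < m
  · rw [Finset.sum_eq_single (⟨k, h⟩ : Fin m)]
    · simp [h]
    · intro b _ hb
      have : k ≠ (b : ℕ) := by
        intro hkb
        exact hb (by ext; simp [hkb.symm])
      simp [this]
    · intro hmem; exact absurd (Finset.mem_univ _) hmem
  · rw [dif_neg h]
    apply Finset.sum_eq_zero
    intro i _
    have : k ≠ (i : ℕ) := by
      intro hk
      exact h (hk ▸ i.2)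
    simp [this]

end Aux

open Aux

theorem not_boundedly_isomorphic_inv_n_and_inv_nlogn :
    ¬ ∃ V : (K × K) ≃L[ℂ] (K × K),
        V '' (firstSummand : Set (K × K)) = (firstSummand : Set (K × K)) ∧
        V '' ((diagGraph fun n : ℕ => 1 / ((n : ℂ) + 1)) : Set (K × K)) =
          ((diagGraph fun n : ℕ =>
              1 / ((((n : ℕ) + 2 : ℕ) : ℂ) * (Real.log ((n : ℝ) + 2) : ℂ))) : Set (K × K)) := by
  rintro ⟨V, hE, hG⟩
  set t1 : ℕ → ℂ := fun n : ℕ => 1 / ((n : ℂ) + 1) with ht1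
  set t2 : ℕ → ℂ := fun n : ℕ =>
      1 / ((((n : ℕ) + 2 : ℕ) : ℂ) * (Real.log ((n : ℝ) + 2) : ℂ)) with ht2
  -- basic facts about the diagonal sequences
  have hlogpos : ∀ n : ℕ, 0 < Real.log ((n : ℝ) + 2) := by
    intro n
    apply Real.log_pos
    have : (0:ℝ) ≤ (n:ℝ) := Nat.cast_nonneg n
    linarith
  have hnorm_t1 : ∀ n : ℕ, ‖t1 n‖ = 1 / ((n : ℝ) + 1) := by
    intro n
    rw [ht1]
    simp only [norm_div, norm_one]
    congr 1
    have : ((n : ℂ) + 1) = ((n + 1 : ℕ) : ℂ) := by push_cast; ring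
    rw [this, Complex.norm_natCast]
    push_cast; ring
  have hnorm_t2 : ∀ n : ℕ, ‖t2 n‖ = 1 / (((n : ℝ) + 2) * Real.log ((n : ℝ) + 2)) := by
    intro n
    rw [ht2]
    simp only [norm_div, norm_one, norm_mul, Complex.norm_natCast, Complex.norm_real,
      Real.norm_eq_abs, abs_of_pos (hlogpos n)]
    push_cast; ring_nf
  have ht1le : ∀ n : ℕ, ‖t1 n‖ ≤ 1 := by
    intro n
    rw [hnorm_t1 n]
    rw [div_le_one (by positivity)]
    have : (0:ℝ) ≤ (n:ℝ) := Nat.cast_nonneg n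
    linarith
  have hlog2 : (0.6931471803 : ℝ) < Real.log 2 := Real.log_two_gt_d9
  have ht2prodge : ∀ n : ℕ, (1:ℝ) ≤ ((n : ℝ) + 2) * Real.log ((n : ℝ) + 2) := by
    intro n
    have hn : (2:ℝ) ≤ (n:ℝ) + 2 := by
      have : (0:ℝ) ≤ (n:ℝ) := Nat.cast_nonneg n
      linarith
    have hl : Real.log 2 ≤ Real.log ((n:ℝ) + 2) := Real.log_le_log (by norm_num) hn
    nlinarith [hlogpos n]
  have ht2le : ∀ n : ℕ, ‖t2 n‖ ≤ 1 := by
    intro n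
    rw [hnorm_t2 n, div_le_one (by have := hlogpos n; positivity)]
    exact ht2prodge n
  -- the diagonal operators
  set D1 : K →L[ℂ] K := diag t1 zero_le_one ht1le with hD1
  set D2 : K →L[ℂ] K := diag t2 zero_le_one ht2le with hD2
  -- membership characterizations
  have hmemE : ∀ p : K × K, p ∈ firstSummand ↔ p.2 = 0 := by
    intro p
    constructor
    · rintro ⟨-, h2⟩; exact (Submodule.mem_bot ℂ).mp h2
    · intro h; exact ⟨Submodule.mem_top, (Submodule.mem_bot ℂ).mpr h⟩
  have hmemG : ∀ (a : ℕ → ℂ) (p : K × K), p ∈ diagGraph a ↔ ∀ n, p.2 n = a n * p.1 n :=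
    fun a p => Iff.rfl
  -- block structure of V and its inverse
  set A : K →L[ℂ] K :=
    (ContinuousLinearMap.fst ℂ K K).comp
      (((V : (K × K) →L[ℂ] (K × K))).comp (ContinuousLinearMap.inl ℂ K K)) with hA
  set A' : K →L[ℂ] K :=
    (ContinuousLinearMap.fst ℂ K K).comp
      (((V.symm : (K × K) →L[ℂ] (K × K))).comp (ContinuousLinearMap.inl ℂ K K)) with hA'
  set W12 : K →L[ℂ] K :=
    (ContinuousLinearMap.fst ℂ K K).comp
      (((V.symm : (K × K) →L[ℂ] (K × K))).comp (ContinuousLinearMap.inr ℂ K K)) with hW12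
  set W22 : K →L[ℂ] K :=
    (ContinuousLinearMap.snd ℂ K K).comp
      (((V.symm : (K × K) →L[ℂ] (K × K))).comp (ContinuousLinearMap.inr ℂ K K)) with hW22
  have hVE : ∀ x : K, V (x, 0) = (A x, 0) := by
    intro x
    have hx : ((x, 0) : K × K) ∈ (firstSummand : Set (K × K)) := (hmemE _).mpr rfl
    have : V (x, 0) ∈ (firstSummand : Set (K × K)) := by
      rw [← hE]; exact Set.mem_image_of_mem V hx
    have h2 : (V (x, 0)).2 = 0 := (hmemE _).mp this
    have h1 : (V (x, 0)).1 = A x := by simp [hA]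
    exact Prod.ext h1 h2
  have hWE : ∀ x : K, V.symm (x, 0) = (A' x, 0) := by
    intro x
    have hx : ((x, 0) : K × K) ∈ (firstSummand : Set (K × K)) := (hmemE _).mpr rfl
    have : V.symm (x, 0) ∈ (firstSummand : Set (K × K)) := by
      rw [← hE] at hx
      obtain ⟨q, hq, hq2⟩ := hx
      rw [← hq2, ContinuousLinearEquiv.symm_apply_apply]
      exact hq
    have h2 : (V.symm (x, 0)).2 = 0 := (hmemE _).mp this
    have h1 : (V.symm (x, 0)).1 = A' x := by simp [hA']
    exact Prod.ext h1 h2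
  have hAA' : ∀ x : K, A' (A x) = x := by
    intro x
    have := hWE (A x)
    rw [← hVE x, ContinuousLinearEquiv.symm_apply_apply] at this
    exact (congrArg Prod.fst this).symm
  have hW : ∀ u v : K, V.symm (u, v) = (A' u + W12 v, W22 v) := by
    intro u v
    have : ((u, v) : K × K) = (u, 0) + (0, v) := by simp
    rw [this, map_add, hWE u]
    have h2 : V.symm (0, v) = (W12 v, W22 v) := by
      apply Prod.ext
      · simp [hW12]
      · simp [hW22]
    rw [h2]
    simp
  -- the graph relation
  have hrel : ∀ u : K, ∀ n : ℕ,
      (W22 (D2 u)) n = t1 n * ((A' u) n + (W12 (D2 u)) n) := by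
    intro u n
    have hu : ((u, D2 u) : K × K) ∈ (diagGraph t2 : Set (K × K)) := by
      intro m; rfl
    have : V.symm (u, D2 u) ∈ (diagGraph t1 : Set (K × K)) := by
      rw [← hG] at hu
      obtain ⟨q, hq, hq2⟩ := hu
      rw [← hq2, ContinuousLinearEquiv.symm_apply_apply]
      exact hq
    rw [hW u (D2 u)] at this
    have := this n
    simpa [lp.coeFn_add, Pi.add_apply] using this
  -- the key identity D1 = X ∘ D2 ∘ A
  set X : K →L[ℂ] K := W22 - D1.comp W12 with hX
  have hkey : ∀ x : K, D1 x = X (D2 (A x)) := by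
    intro x
    apply Subtype.ext
    funext n
    have h1 : (X (D2 (A x))) n = (W22 (D2 (A x))) n - (D1 (W12 (D2 (A x)))) n := by
      rw [hX]
      simp [ContinuousLinearMap.sub_apply, ContinuousLinearMap.comp_apply, lp.coeFn_sub,
        Pi.sub_apply]
    have h2 := hrel (A x) n
    rw [hAA' x] at h2
    show (D1 x : ∀ _ : ℕ, ℂ) n = _
    rw [h1, h2]
    show t1 n * x n = _ - (D1 (W12 (D2 (A x)))) n
    have : (D1 (W12 (D2 (A x)))) n = t1 n * (W12 (D2 (A x))) n := rfl
    rw [this]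
    ring
  -- finite-dimensional argument: for every n, log(n+2) ≤ ‖X‖ * ‖A‖
  have hmain : ∀ n : ℕ, Real.log ((n : ℝ) + 2) ≤ ‖X‖ * ‖A‖ := by
    intro n
    -- find a nonzero vector supported on coordinates ≤ n with (A x) vanishing below n
    set φ : (Fin (n + 1) → ℂ) →ₗ[ℂ] (Fin n → ℂ) :=
      LinearMap.pi (fun j : Fin n =>
        (evalLM (j : ℕ)).comp (A.toLinearMap.comp (sumSingle (n + 1)))) with hφ
    have hker : LinearMap.ker φ ≠ ⊥ := by
      apply LinearMap.ker_ne_bot_of_finrank_lt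
      rw [Module.finrank_fintype_fun_eq_card, Module.finrank_fintype_fun_eq_card]
      simp
    obtain ⟨c, hc, hc0⟩ := (Submodule.ne_bot_iff _).mp hker
    set x : K := sumSingle (n + 1) c with hxdef
    have hx0 : x ≠ 0 := by
      intro h
      apply hc0
      funext i
      have := congrArg (fun y : K => (y : ∀ _ : ℕ, ℂ) (i : ℕ)) h
      simp only [hxdef] at this
      rw [sumSingle_apply] at this
      rw [dif_pos i.2] at this
      simpa [lp.coeFn_zero] using this
    have hxnorm : 0 < ‖x‖ := norm_pos_iff.mpr hx0
    have hxhigh : ∀ k : ℕ, n + 1 ≤ k → (x : ∀ _ : ℕ, ℂ) k = 0 := by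
      intro k hk
      rw [hxdef, sumSingle_apply, dif_neg (by omega)]
    have hAxlow : ∀ j : ℕ, j < n → (A x : ∀ _ : ℕ, ℂ) j = 0 := by
      intro j hj
      have := congrFun (LinearMap.mem_ker.mp hc) ⟨j, hj⟩
      simp [hφ, LinearMap.pi_apply, evalLM, hxdef] at this
      exact this
    -- lower bound : ‖x‖ ≤ (n+1) * ‖D1 x‖
    set a' : ℕ → ℂ := fun k => if k ≤ n then ((k : ℂ) + 1) else 0 with ha'
    have ha'le : ∀ k : ℕ, ‖a' k‖ ≤ ((n : ℝ) + 1) := by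
      intro k
      by_cases h : k ≤ n
      · simp only [ha', if_pos h]
        have : ((k : ℂ) + 1) = ((k + 1 : ℕ) : ℂ) := by push_cast; ring
        rw [this, Complex.norm_natCast]
        push_cast
        have : (k : ℝ) ≤ (n : ℝ) := Nat.cast_le.mpr h
        linarith
      · simp only [ha', if_neg h]
        simp only [norm_zero]
        positivity
    have ha'C : (0:ℝ) ≤ (n : ℝ) + 1 := by positivity
    have hrecover : diag a' ha'C ha'le (D1 x) = x := by
      apply Subtype.ext
      funext k
      show a' k * ((D1 x : ∀ _ : ℕ, ℂ) k) = (x : ∀ _ : ℕ, ℂ) k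
      have hD1x : (D1 x : ∀ _ : ℕ, ℂ) k = t1 k * x k := rfl
      rw [hD1x]
      by_cases h : k ≤ n
      · simp only [ha', if_pos h, ht1]
        have hk : ((k : ℂ) + 1) ≠ 0 := by
          intro hk0
          have := congrArg Complex.re hk0
          simp at this
          have : (0:ℝ) ≤ (k:ℝ) := Nat.cast_nonneg k
          linarith
        field_simp
      · simp only [ha', if_neg h]
        rw [hxhigh k (by omega)]
        ring
    have hlower : ‖x‖ ≤ ((n : ℝ) + 1) * ‖D1 x‖ := by
      calc ‖x‖ = ‖diag a' ha'C ha'le (D1 x)‖ := by rw [hrecover]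
        _ ≤ ((n : ℝ) + 1) * ‖D1 x‖ := diag_norm_le _ _ _ _
    -- upper bound : ‖D2 (A x)‖ ≤ C2 * ‖A x‖ with C2 = 1/((n+2) log(n+2))
    set C2 : ℝ := 1 / (((n : ℝ) + 2) * Real.log ((n : ℝ) + 2)) with hC2
    have hC2pos : 0 < C2 := by
      rw [hC2]
      have := hlogpos n
      positivity
    set b : ℕ → ℂ := fun k => if n ≤ k then t2 k else 0 with hb
    have hble : ∀ k : ℕ, ‖b k‖ ≤ C2 := by
      intro k
      by_cases h : n ≤ k
      · simp only [hb, if_pos h]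
        rw [hnorm_t2 k, hC2]
        apply one_div_le_one_div_of_le
        · have := hlogpos n; positivity
        · apply mul_le_mul
          · have : (n:ℝ) ≤ (k:ℝ) := Nat.cast_le.mpr h
            linarith
          · apply Real.log_le_log (by positivity)
            have : (n:ℝ) ≤ (k:ℝ) := Nat.cast_le.mpr h
            linarith
          · exact (hlogpos n).le
          · positivity
      · simp only [hb, if_neg h]
        simpa using hC2pos.le
    have hD2b : D2 (A x) = diag b hC2pos.le hble (A x) := by
      apply Subtype.ext
      funext k
      show t2 k * ((A x : ∀ _ : ℕ, ℂ) k) = b k * ((A x : ∀ _ : ℕ, ℂ) k)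
      by_cases h : n ≤ k
      · simp only [hb, if_pos h]
      · simp only [hb, if_neg h]
        rw [hAxlow k (by omega)]
        ring
    have hupper : ‖D2 (A x)‖ ≤ C2 * (‖A‖ * ‖x‖) := by
      rw [hD2b]
      calc ‖diag b hC2pos.le hble (A x)‖ ≤ C2 * ‖A x‖ := diag_norm_le _ _ _ _
        _ ≤ C2 * (‖A‖ * ‖x‖) :=
          mul_le_mul_of_nonneg_left (A.le_opNorm x) hC2pos.le
    -- combine
    have hXA : ‖D1 x‖ ≤ ‖X‖ * (C2 * (‖A‖ * ‖x‖)) := by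
      rw [hkey x]
      calc ‖X (D2 (A x))‖ ≤ ‖X‖ * ‖D2 (A x)‖ := X.le_opNorm _
        _ ≤ ‖X‖ * (C2 * (‖A‖ * ‖x‖)) :=
          mul_le_mul_of_nonneg_left hupper (norm_nonneg X)
    have hchain : ‖x‖ ≤ ((n : ℝ) + 1) * (‖X‖ * (C2 * (‖A‖ * ‖x‖))) := by
      calc ‖x‖ ≤ ((n : ℝ) + 1) * ‖D1 x‖ := hlower
        _ ≤ ((n : ℝ) + 1) * (‖X‖ * (C2 * (‖A‖ * ‖x‖))) :=
          mul_le_mul_of_nonneg_left hXA (by positivity)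
    have h1 : (1:ℝ) ≤ ((n : ℝ) + 1) * ‖X‖ * C2 * ‖A‖ := by
      have := hchain
      rw [show ((n : ℝ) + 1) * (‖X‖ * (C2 * (‖A‖ * ‖x‖))) = (((n : ℝ) + 1) * ‖X‖ * C2 * ‖A‖) * ‖x‖ by ring] at this
      exact le_of_mul_le_mul_right (by linarith [this]) hxnorm
    -- unfold C2
    have hL := hlogpos n
    have hprod : ((n : ℝ) + 2) * Real.log ((n : ℝ) + 2) ≤ ((n : ℝ) + 1) * (‖X‖ * ‖A‖) := by
      have hppos : (0:ℝ) < ((n : ℝ) + 2) * Real.log ((n : ℝ) + 2) := by positivity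
      have := mul_le_mul_of_nonneg_right h1 hppos.le
      rw [one_mul] at this
      calc ((n : ℝ) + 2) * Real.log ((n : ℝ) + 2)
          ≤ ((n : ℝ) + 1) * ‖X‖ * C2 * ‖A‖ * (((n : ℝ) + 2) * Real.log ((n : ℝ) + 2)) := this
        _ = ((n : ℝ) + 1) * (‖X‖ * ‖A‖) * (C2 * (((n : ℝ) + 2) * Real.log ((n : ℝ) + 2))) := by ring
        _ = ((n : ℝ) + 1) * (‖X‖ * ‖A‖) := by
            rw [hC2, one_div_mul_cancel (by positivity), mul_one]
    have hXAnn : (0:ℝ) ≤ ‖X‖ * ‖A‖ := by positivity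
    have h2le : ((n : ℝ) + 1) * (‖X‖ * ‖A‖) ≤ ((n : ℝ) + 2) * (‖X‖ * ‖A‖) := by
      apply mul_le_mul_of_nonneg_right _ hXAnn
      linarith
    have hfin : ((n : ℝ) + 2) * Real.log ((n : ℝ) + 2) ≤ ((n : ℝ) + 2) * (‖X‖ * ‖A‖) :=
      hprod.trans h2le
    have hn2 : (0:ℝ) < (n : ℝ) + 2 := by positivity
    exact le_of_mul_le_mul_left hfin hn2
  -- contradiction: log is unbounded
  set M : ℝ := ‖X‖ * ‖A‖ with hM
  set n : ℕ := ⌈Real.exp M⌉₊ with hn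
  have h1 : Real.exp M ≤ (n : ℝ) := Nat.le_ceil _
  have h2 : Real.exp M < (n : ℝ) + 2 := by linarith
  have h3 : M < Real.log ((n : ℝ) + 2) := by
    rw [← Real.log_exp M]
    exact Real.log_lt_log (Real.exp_pos M) h2
  exact absurd (hmain n) (not_le.mpr h3)

end
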